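/- In a square ice configuration matrix with U-turn boundary, mapping WE to 1, NS to −1, and NE, SW, NW, SE to 0 yields a μ-alternating sign matrix with U-turn boundary, and this map χ is a bijection between the set of configuration matrices CM^μ(2n) and the set of μ-UASMs UA^μ(2n). -/
import Mathlib


open scoped Classical

/-- A `μ`-alternating sign matrix with U-turn boundary (μ-UASM):
a `2n × m` matrix over `ℤ` satisfying (UA1)–(UA5). -/
def IsUASM (n m : ℕ) (μ : Fin n → ℕ) (A : Fin (2*n) → Fin m → ℤ) : Prop :=
  (∀ i q, A i q = -1 ∨ A i q = 0 ∨ A i q = 1) ∧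
  (∀ (i : Fin (2*n)) (p : Fin m),
      (∑ q ∈ Finset.univ.filter (fun q => p ≤ q), A i q) = 0 ∨
      (∑ q ∈ Finset.univ.filter (fun q => p ≤ q), A i q) = 1) ∧
  (∀ (j : Fin (2*n)) (q : Fin m),
      (∑ i ∈ Finset.univ.filter (fun i => j ≤ i), A i q) = 0 ∨
      (∑ i ∈ Finset.univ.filter (fun i => j ≤ i), A i q) = 1) ∧
  (∀ k : Fin n,
      (∑ q : Fin m, (A ⟨2*k.val, by have := k.isLt; omega⟩ q
           + A ⟨2*k.val+1, by have := k.isLt; omega⟩ q)) = 1) ∧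
  (∀ q : Fin m, (∑ i, A i q) = if ∃ k, μ k = q.val+1 then 1 else 0)

/-- The six square-ice vertex types, in the order `WE, NS, NE, SW, NW, SE`,
each recorded by which of its four edges (in the order `N, S, E, W`) are
incoming (`true`) or outgoing (`false`). -/
def iceIn : Fin 6 → Fin 4 → Bool :=
  ![![false, false, true,  true ],   -- WE : in W,E ; out N,S
    ![true,  true,  false, false],   -- NS : in N,S ; out W,E
    ![false, true,  false, true ],   -- NE : in W,S ; out N,E
    ![true,  false, true,  false],   -- SW : in N,E ; out S,W
    ![false, true,  true,  false],   -- NW : in E,S ; out N,W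
    ![true,  false, false, true ]]   -- SE : in W,N ; out S,E

/-- The value of each vertex type: `WE ↦ 1`, `NS ↦ −1`, the rest `↦ 0`. -/
def iceVal : Fin 6 → ℤ := ![1, -1, 0, 0, 0, 0]

/-- A square-ice configuration matrix with U-turn boundary for the partition
`μ`: internal edges match up, all right-hand boundary edges are incoming,
all bottom boundary edges are outgoing, each left-hand pair of boundary edges
is a U-turn (one incoming, one outgoing), and the top boundary edge of column
`q` is outgoing precisely when `q` is a part of `μ`. -/
def IsCM (n m : ℕ) (μ : Fin n → ℕ) (C : Fin (2*n) → Fin m → Fin 6) : Prop :=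
  (∀ (i : Fin (2*n)) (q : Fin m) (h : q.val + 1 < m),
      iceIn (C i ⟨q.val+1, h⟩) 3 = ! iceIn (C i q) 2) ∧
  (∀ (i : Fin (2*n)) (q : Fin m) (h : i.val + 1 < 2*n),
      iceIn (C ⟨i.val+1, h⟩ q) 0 = ! iceIn (C i q) 1) ∧
  (∀ (i : Fin (2*n)) (hm0 : 0 < m),
      iceIn (C i ⟨m-1, by omega⟩) 2 = true) ∧
  (∀ (q : Fin m) (hn0 : 0 < n),
      iceIn (C ⟨2*n-1, by omega⟩ q) 1 = false) ∧
  (∀ (q : Fin m) (hn0 : 0 < n),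
      (iceIn (C ⟨0, by omega⟩ q) 0 = false ↔ ∃ k, μ k = q.val + 1)) ∧
  (∀ (k : Fin n) (hm0 : 0 < m),
      iceIn (C ⟨2*k.val, by have := k.isLt; omega⟩ ⟨0, hm0⟩) 3
        = ! iceIn (C ⟨2*k.val+1, by have := k.isLt; omega⟩ ⟨0, hm0⟩) 3)

/- ### Auxiliary development for `ice_bijection` -/

namespace IceBij

/-- Integer indicator of a boolean. -/
def bi (b : Bool) : ℤ := if b then 1 else 0

lemma bi_not (b : Bool) : bi (!b) = 1 - bi b := by cases b <;> simp [bi]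

section Sums
variable {N M : ℕ}

/-- Row sum from column `q` (inclusive) to the right end. -/
def rsum (A : Fin N → Fin M → ℤ) (i : Fin N) (q : Fin M) : ℤ :=
  ∑ p ∈ Finset.univ.filter (fun p => q ≤ p), A i p

/-- Row sum strictly to the right of column `q`. -/
def rsum' (A : Fin N → Fin M → ℤ) (i : Fin N) (q : Fin M) : ℤ :=
  ∑ p ∈ Finset.univ.filter (fun p => q < p), A i p

/-- Column sum from row `j` (inclusive) down to the bottom. -/
def csum (A : Fin N → Fin M → ℤ) (j : Fin N) (q : Fin M) : ℤ :=
  ∑ i ∈ Finset.univ.filter (fun i => j ≤ i), A i q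

/-- Column sum strictly below row `j`. -/
def csum' (A : Fin N → Fin M → ℤ) (j : Fin N) (q : Fin M) : ℤ :=
  ∑ i ∈ Finset.univ.filter (fun i => j < i), A i q

lemma rsum_eq (A : Fin N → Fin M → ℤ) (i : Fin N) (q : Fin M) :
    rsum A i q = A i q + rsum' A i q := by
  unfold rsum rsum'
  rw [show Finset.univ.filter (fun p => q ≤ p) =
      insert q (Finset.univ.filter (fun p => q < p)) by
    ext p
    simp only [Finset.mem_filter, Finset.mem_univ, true_and, Finset.mem_insert]
    constructor
    · intro h; rcases eq_or_lt_of_le h with h | h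
      · exact Or.inl h.symm
      · exact Or.inr h
    · rintro (rfl | h); · exact le_refl _
      · exact le_of_lt h,
    Finset.sum_insert (by simp)]

lemma rsum'_succ (A : Fin N → Fin M → ℤ) (i : Fin N) (q : Fin M) (h : q.val + 1 < M) :
    rsum' A i q = rsum A i ⟨q.val + 1, h⟩ := by
  unfold rsum rsum'
  rw [show (Finset.univ.filter (fun p => q < p)) =
      (Finset.univ.filter (fun p => (⟨q.val + 1, h⟩ : Fin M) ≤ p)) from by
    ext p
    simp only [Finset.mem_filter, Finset.mem_univ, true_and, Fin.lt_def, Fin.le_def]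
    omega]

lemma rsum'_last (A : Fin N → Fin M → ℤ) (i : Fin N) (q : Fin M) (h : ¬ q.val + 1 < M) :
    rsum' A i q = 0 := by
  unfold rsum'
  rw [Finset.filter_false_of_mem, Finset.sum_empty]
  intro p _
  simp only [Fin.lt_def]
  have := p.isLt
  omega

lemma rsum_zero (A : Fin N → Fin M → ℤ) (i : Fin N) (h0 : 0 < M) :
    rsum A i ⟨0, h0⟩ = ∑ p, A i p := by
  unfold rsum
  rw [Finset.filter_true_of_mem]
  intro p _
  exact Fin.mk_le_of_le_val (Nat.zero_le _)

lemma csum_eq (A : Fin N → Fin M → ℤ) (j : Fin N) (q : Fin M) :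
    csum A j q = A j q + csum' A j q := by
  unfold csum csum'
  rw [show Finset.univ.filter (fun i => j ≤ i) =
      insert j (Finset.univ.filter (fun i => j < i)) by
    ext p
    simp only [Finset.mem_filter, Finset.mem_univ, true_and, Finset.mem_insert]
    constructor
    · intro h; rcases eq_or_lt_of_le h with h | h
      · exact Or.inl h.symm
      · exact Or.inr h
    · rintro (rfl | h); · exact le_refl _
      · exact le_of_lt h,
    Finset.sum_insert (by simp)]

lemma csum'_succ (A : Fin N → Fin M → ℤ) (j : Fin N) (q : Fin M) (h : j.val + 1 < N) :
    csum' A j q = csum A ⟨j.val + 1, h⟩ q := by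
  unfold csum csum'
  rw [show (Finset.univ.filter (fun i => j < i)) =
      (Finset.univ.filter (fun i => (⟨j.val + 1, h⟩ : Fin N) ≤ i)) from by
    ext p
    simp only [Finset.mem_filter, Finset.mem_univ, true_and, Fin.lt_def, Fin.le_def]
    omega]

lemma csum'_last (A : Fin N → Fin M → ℤ) (j : Fin N) (q : Fin M) (h : ¬ j.val + 1 < N) :
    csum' A j q = 0 := by
  unfold csum'
  rw [Finset.filter_false_of_mem, Finset.sum_empty]
  intro p _
  simp only [Fin.lt_def]
  have := p.isLt
  omega

lemma csum_zero (A : Fin N → Fin M → ℤ) (q : Fin M) (h0 : 0 < N) :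
    csum A ⟨0, h0⟩ q = ∑ i, A i q := by
  unfold csum
  rw [Finset.filter_true_of_mem]
  intro p _
  exact Fin.mk_le_of_le_val (Nat.zero_le _)

end Sums

/-- Reconstruct the vertex type from the four boundary bits `(N, S, E, W)`. -/
def typeOf : Bool → Bool → Bool → Bool → Fin 6
  | false, false, true, true => 0
  | true, true, false, false => 1
  | false, true, false, true => 2
  | true, false, true, false => 3
  | false, true, true, false => 4
  | true, false, false, true => 5
  | _, _, _, _ => 0

lemma typeOf_iceIn : ∀ t : Fin 6,
    typeOf (iceIn t 0) (iceIn t 1) (iceIn t 2) (iceIn t 3) = t := by decide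

lemma iceIn_typeOf : ∀ a b c d : Bool, a.toNat + b.toNat + c.toNat + d.toNat = 2 →
    iceIn (typeOf a b c d) 0 = a ∧ iceIn (typeOf a b c d) 1 = b ∧
    iceIn (typeOf a b c d) 2 = c ∧ iceIn (typeOf a b c d) 3 = d := by decide

lemma iceVal_eq : ∀ t, iceVal t = bi (iceIn t 2) + bi (iceIn t 3) - 1 := by decide

lemma iceVal_mem : ∀ t, iceVal t = -1 ∨ iceVal t = 0 ∨ iceVal t = 1 := by decide

lemma wbit_vert : ∀ t, bi (iceIn t 3) = iceVal t + 1 - bi (iceIn t 2) := by decide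

lemma nbit_vert : ∀ t, bi (iceIn t 0) = 1 - iceVal t - bi (iceIn t 1) := by decide

section Bits
variable {n m : ℕ} {μ : Fin n → ℕ} {C : Fin (2*n) → Fin m → Fin 6}

lemma ebit (hC : IsCM n m μ C) (i : Fin (2*n)) (q : Fin m) :
    bi (iceIn (C i q) 2) = 1 - rsum' (fun i q => iceVal (C i q)) i q := by
  suffices h : ∀ (k : ℕ) (q : Fin m), m - q.val = k + 1 →
      bi (iceIn (C i q) 2) = 1 - rsum' (fun i q => iceVal (C i q)) i q by
    have hq := q.isLt
    exact h (m - q.val - 1) q (by omega)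
  intro k
  induction k with
  | zero =>
    intro q hq
    have hq' : ¬ q.val + 1 < m := by omega
    have : q = ⟨m - 1, by omega⟩ := Fin.ext (show q.val = m - 1 by omega)
    rw [rsum'_last _ _ _ hq', this, hC.2.2.1 i (by omega)]
    simp [bi]
  | succ k ih =>
    intro q hq
    have h1 : q.val + 1 < m := by omega
    have hih := ih ⟨q.val + 1, h1⟩ (show m - (q.val + 1) = k + 1 by omega)
    have h2 := hC.1 i q h1
    have h3 := wbit_vert (C i ⟨q.val + 1, h1⟩)
    rw [h2, bi_not] at h3
    have h4 : rsum' (fun i q => iceVal (C i q)) i q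
        = iceVal (C i ⟨q.val + 1, h1⟩) + rsum' (fun i q => iceVal (C i q)) i ⟨q.val + 1, h1⟩ := by
      rw [rsum'_succ _ _ _ h1, rsum_eq]
    rw [hih] at h3
    rw [h4]
    linarith

lemma wbit (hC : IsCM n m μ C) (i : Fin (2*n)) (q : Fin m) :
    bi (iceIn (C i q) 3) = rsum (fun i q => iceVal (C i q)) i q := by
  rw [wbit_vert, ebit hC, rsum_eq]
  ring

lemma sbit (hC : IsCM n m μ C) (i : Fin (2*n)) (q : Fin m) :
    bi (iceIn (C i q) 1) = csum' (fun i q => iceVal (C i q)) i q := by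
  suffices h : ∀ (k : ℕ) (i : Fin (2*n)), 2*n - i.val = k + 1 →
      bi (iceIn (C i q) 1) = csum' (fun i q => iceVal (C i q)) i q by
    have hi := i.isLt
    exact h (2*n - i.val - 1) i (by omega)
  intro k
  induction k with
  | zero =>
    intro i hi
    have hi' : ¬ i.val + 1 < 2*n := by omega
    have hn0 : 0 < n := by have := i.isLt; omega
    have : i = ⟨2*n - 1, by omega⟩ := Fin.ext (show i.val = 2*n - 1 by omega)
    rw [csum'_last _ _ _ hi', this, hC.2.2.2.1 q hn0]
    simp [bi]
  | succ k ih =>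
    intro i hi
    have h1 : i.val + 1 < 2*n := by omega
    have hih := ih ⟨i.val + 1, h1⟩ (show 2*n - (i.val + 1) = k + 1 by omega)
    have h2 := hC.2.1 i q h1
    have h3 := nbit_vert (C ⟨i.val + 1, h1⟩ q)
    rw [h2, bi_not] at h3
    have h4 : csum' (fun i q => iceVal (C i q)) i q
        = iceVal (C ⟨i.val + 1, h1⟩ q) + csum' (fun i q => iceVal (C i q)) ⟨i.val + 1, h1⟩ q := by
      rw [csum'_succ _ _ _ h1, csum_eq]
    rw [hih] at h3
    rw [h4]
    linarith

lemma nbit (hC : IsCM n m μ C) (i : Fin (2*n)) (q : Fin m) :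
    bi (iceIn (C i q) 0) = 1 - csum (fun i q => iceVal (C i q)) i q := by
  rw [nbit_vert, sbit hC, csum_eq]
  ring

end Bits

/-- Reconstruction of a configuration matrix from a matrix of values. -/
def psi {N M : ℕ} (A : Fin N → Fin M → ℤ) : Fin N → Fin M → Fin 6 :=
  fun i q => typeOf (decide (csum A i q = 0)) (decide (csum' A i q = 1))
    (decide (rsum' A i q = 0)) (decide (rsum A i q = 1))

end IceBij

open IceBij in
set_option maxHeartbeats 1000000 in
lemma chi_isUASM (n m : ℕ) (hn : 0 < n) (μ : Fin n → ℕ) (hm0 : 0 < m)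
    (C : Fin (2*n) → Fin m → Fin 6) (hC : IsCM n m μ C) :
    IsUASM n m μ (fun i q => iceVal (C i q)) := by
  have hN0 : 0 < 2*n := by omega
  refine ⟨fun i q => iceVal_mem _, ?_, ?_, ?_, ?_⟩
  · intro i p
    have hw := wbit hC i p
    have he₁ : (∑ q ∈ Finset.univ.filter (fun q => p ≤ q), iceVal (C i q))
        = rsum (fun i q => iceVal (C i q)) i p := rfl
    rw [he₁, ← hw]
    cases iceIn (C i p) 3 <;> simp [bi]
  · intro j q
    have hnb := nbit hC j q
    have he₁ : (∑ i ∈ Finset.univ.filter (fun i => j ≤ i), iceVal (C i q))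
        = csum (fun i q => iceVal (C i q)) j q := rfl
    have he₂ : csum (fun i q => iceVal (C i q)) j q = 1 - bi (iceIn (C j q) 0) := by
      linarith
    rw [he₁, he₂]
    cases iceIn (C j q) 0 <;> simp [bi]
  · intro k
    have hk := k.isLt
    show (∑ q : Fin m, (iceVal (C ⟨2*k.val, by omega⟩ q) + iceVal (C ⟨2*k.val+1, by omega⟩ q))) = 1
    rw [Finset.sum_add_distrib]
    have e1 : (∑ q : Fin m, iceVal (C ⟨2*k.val, by omega⟩ q))
        = rsum (fun i q => iceVal (C i q)) ⟨2*k.val, by omega⟩ ⟨0, hm0⟩ :=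
      (rsum_zero (fun i q => iceVal (C i q)) ⟨2*k.val, by omega⟩ hm0).symm
    have e2 : (∑ q : Fin m, iceVal (C ⟨2*k.val+1, by omega⟩ q))
        = rsum (fun i q => iceVal (C i q)) ⟨2*k.val+1, by omega⟩ ⟨0, hm0⟩ :=
      (rsum_zero (fun i q => iceVal (C i q)) ⟨2*k.val+1, by omega⟩ hm0).symm
    have hw1 := wbit hC ⟨2*k.val, by omega⟩ ⟨0, hm0⟩
    have hw2 := wbit hC ⟨2*k.val+1, by omega⟩ ⟨0, hm0⟩
    have h6 : iceIn (C ⟨2*k.val, by omega⟩ ⟨0, hm0⟩) 3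
        = ! iceIn (C ⟨2*k.val+1, by omega⟩ ⟨0, hm0⟩) 3 := hC.2.2.2.2.2 k hm0
    rw [e1, e2, ← hw1, ← hw2, h6]
    cases iceIn (C ⟨2*k.val+1, by omega⟩ ⟨0, hm0⟩) 3 <;> simp [bi]
  · intro q
    have hnb := nbit hC ⟨0, hN0⟩ q
    have hcz : csum (fun i q => iceVal (C i q)) ⟨0, hN0⟩ q
        = ∑ i, iceVal (C i q) := csum_zero _ q hN0
    have hn' : 0 < n := by omega
    have h5 := hC.2.2.2.2.1 q hn'
    show (∑ i, iceVal (C i q)) = if ∃ k, μ k = q.val+1 then 1 else 0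
    by_cases hq : ∃ k, μ k = q.val + 1
    · have h5' : iceIn (C ⟨0, hN0⟩ q) 0 = false := h5.mpr hq
      rw [if_pos hq, ← hcz]
      rw [h5'] at hnb
      simp [bi] at hnb
      linarith
    · have h5' : iceIn (C ⟨0, hN0⟩ q) 0 = true := by
        cases hb : iceIn (C ⟨0, hN0⟩ q) 0
        · exact absurd (h5.mp hb) hq
        · rfl
      rw [if_neg hq, ← hcz]
      rw [h5'] at hnb
      simp [bi] at hnb
      linarith

open IceBij in
set_option maxHeartbeats 1000000 in
lemma psi_key (n m : ℕ) (hn : 0 < n) (μ : Fin n → ℕ) (hm0 : 0 < m)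
    (A : Fin (2*n) → Fin m → ℤ) (hA : IsUASM n m μ A) :
    IsCM n m μ (IceBij.psi A) ∧ (fun i q => iceVal (IceBij.psi A i q)) = A := by
  have hN0 : 0 < 2*n := by omega
  obtain ⟨hA1, hA2, hA3, hA4, hA5⟩ := hA
  have hrs : ∀ i q, rsum A i q = 0 ∨ rsum A i q = 1 := hA2
  have hcs : ∀ j q, csum A j q = 0 ∨ csum A j q = 1 := hA3
  have hrs' : ∀ (i : Fin (2*n)) (q : Fin m), rsum' A i q = 0 ∨ rsum' A i q = 1 := by
    intro i q
    by_cases h : q.val + 1 < m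
    · rw [rsum'_succ _ _ _ h]; exact hrs _ _
    · rw [rsum'_last _ _ _ h]; exact Or.inl rfl
  have hcs' : ∀ (j : Fin (2*n)) (q : Fin m), csum' A j q = 0 ∨ csum' A j q = 1 := by
    intro j q
    by_cases h : j.val + 1 < 2*n
    · rw [csum'_succ _ _ _ h]; exact hcs _ _
    · rw [csum'_last _ _ _ h]; exact Or.inl rfl
  have hsum2 : ∀ (i : Fin (2*n)) (q : Fin m),
      (decide (csum A i q = 0)).toNat + (decide (csum' A i q = 1)).toNat
        + (decide (rsum' A i q = 0)).toNat + (decide (rsum A i q = 1)).toNat = 2 := by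
    intro i q
    have h1 := rsum_eq A i q
    have h2 := csum_eq A i q
    rcases hrs i q with h | h <;> rcases hcs i q with hb | hb <;>
      rcases hrs' i q with hc | hc <;> rcases hcs' i q with hd | hd <;>
      rw [h, hc] at h1 <;> rw [hb, hd] at h2 <;>
      simp [h, hb, hc, hd] <;> omega
  have hbits : ∀ (i : Fin (2*n)) (q : Fin m),
      iceIn (IceBij.psi A i q) 0 = decide (csum A i q = 0) ∧
      iceIn (IceBij.psi A i q) 1 = decide (csum' A i q = 1) ∧
      iceIn (IceBij.psi A i q) 2 = decide (rsum' A i q = 0) ∧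
      iceIn (IceBij.psi A i q) 3 = decide (rsum A i q = 1) := by
    intro i q
    exact iceIn_typeOf _ _ _ _ (hsum2 i q)
  constructor
  · refine ⟨?_, ?_, ?_, ?_, ?_, ?_⟩
    · intro i q h
      rw [(hbits i ⟨q.val+1, h⟩).2.2.2, (hbits i q).2.2.1]
      have e : rsum A i ⟨q.val+1, h⟩ = rsum' A i q := (rsum'_succ A i q h).symm
      rw [e]
      rcases hrs' i q with hc | hc <;> simp [hc]
    · intro i q h
      rw [(hbits ⟨i.val+1, h⟩ q).1, (hbits i q).2.1]
      have e : csum A ⟨i.val+1, h⟩ q = csum' A i q := (csum'_succ A i q h).symm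
      rw [e]
      rcases hcs' i q with hc | hc <;> simp [hc]
    · intro i hm0'
      rw [(hbits i ⟨m-1, by omega⟩).2.2.1]
      have e : rsum' A i ⟨m-1, by omega⟩ = 0 :=
        rsum'_last _ _ _ (show ¬ (m-1) + 1 < m by omega)
      rw [e]
      simp
    · intro q hn0
      rw [(hbits ⟨2*n-1, by omega⟩ q).2.1]
      have e : csum' A ⟨2*n-1, by omega⟩ q = 0 :=
        csum'_last _ _ _ (show ¬ (2*n-1) + 1 < 2*n by omega)
      rw [e]
      simp
    · intro q hn0
      rw [(hbits ⟨0, by omega⟩ q).1]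
      have e : csum A ⟨0, by omega⟩ q = ∑ i, A i q := csum_zero A q hN0
      rw [e, hA5 q]
      by_cases hq : ∃ k, μ k = q.val + 1 <;> simp [hq]
    · intro k hm0'
      have hk := k.isLt
      have hkk0 : 2*k.val < 2*n := by omega
      have hkk : 2*k.val+1 < 2*n := by omega
      show iceIn (IceBij.psi A ⟨2*k.val, hkk0⟩ ⟨0, hm0'⟩) 3
          = ! iceIn (IceBij.psi A ⟨2*k.val+1, hkk⟩ ⟨0, hm0'⟩) 3
      rw [(hbits ⟨2*k.val, hkk0⟩ ⟨0, hm0'⟩).2.2.2, (hbits ⟨2*k.val+1, hkk⟩ ⟨0, hm0'⟩).2.2.2]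
      have h4 := hA4 k
      rw [Finset.sum_add_distrib] at h4
      have e1 := rsum_zero A ⟨2*k.val, hkk0⟩ hm0'
      have e2 := rsum_zero A ⟨2*k.val+1, hkk⟩ hm0'
      have hv : rsum A ⟨2*k.val, hkk0⟩ ⟨0, hm0'⟩ + rsum A ⟨2*k.val+1, hkk⟩ ⟨0, hm0'⟩ = 1 := by
        rw [e1, e2]; exact h4
      rcases hrs ⟨2*k.val, hkk0⟩ ⟨0, hm0'⟩ with h | h
      · have hb : rsum A ⟨2*k.val+1, hkk⟩ ⟨0, hm0'⟩ = 1 := by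
          rw [h] at hv; linarith
        rw [h, hb]; norm_num
      · have hb : rsum A ⟨2*k.val+1, hkk⟩ ⟨0, hm0'⟩ = 0 := by
          rw [h] at hv; linarith
        rw [h, hb]; norm_num
  · funext i q
    have hval := iceVal_eq (IceBij.psi A i q)
    rw [(hbits i q).2.2.1, (hbits i q).2.2.2] at hval
    show iceVal (IceBij.psi A i q) = A i q
    rw [hval]
    have h1 := rsum_eq A i q
    rcases hrs i q with h | h <;> rcases hrs' i q with hb | hb <;>
      rw [h, hb] at h1 ⊢ <;> simp [bi] <;> linarith

open IceBij in
set_option maxHeartbeats 1000000 in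
lemma psi_chi (n m : ℕ) (μ : Fin n → ℕ)
    (C : Fin (2*n) → Fin m → Fin 6) (hC : IsCM n m μ C) :
    IceBij.psi (fun i q => iceVal (C i q)) = C := by
  funext i q
  have hbn := nbit hC i q
  have hbs := sbit hC i q
  have hbe := ebit hC i q
  have hbw := wbit hC i q
  show typeOf (decide (csum (fun i q => iceVal (C i q)) i q = 0))
      (decide (csum' (fun i q => iceVal (C i q)) i q = 1))
      (decide (rsum' (fun i q => iceVal (C i q)) i q = 0))
      (decide (rsum (fun i q => iceVal (C i q)) i q = 1)) = C i q
  have e0 : decide (csum (fun i q => iceVal (C i q)) i q = 0) = iceIn (C i q) 0 := by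
    cases hb : iceIn (C i q) 0 <;> rw [hb] at hbn <;> simp [bi] at hbn
    · have hv : csum (fun i q => iceVal (C i q)) i q = 1 := by linarith
      simp [hv]
    · have hv : csum (fun i q => iceVal (C i q)) i q = 0 := by linarith
      simp [hv]
  have e1 : decide (csum' (fun i q => iceVal (C i q)) i q = 1) = iceIn (C i q) 1 := by
    cases hb : iceIn (C i q) 1 <;> rw [hb] at hbs <;> simp [bi] at hbs
    · have hv : csum' (fun i q => iceVal (C i q)) i q = 0 := by linarith
      simp [hv]
    · have hv : csum' (fun i q => iceVal (C i q)) i q = 1 := by linarith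
      simp [hv]
  have e2 : decide (rsum' (fun i q => iceVal (C i q)) i q = 0) = iceIn (C i q) 2 := by
    cases hb : iceIn (C i q) 2 <;> rw [hb] at hbe <;> simp [bi] at hbe
    · have hv : rsum' (fun i q => iceVal (C i q)) i q = 1 := by linarith
      simp [hv]
    · have hv : rsum' (fun i q => iceVal (C i q)) i q = 0 := by linarith
      simp [hv]
  have e3 : decide (rsum (fun i q => iceVal (C i q)) i q = 1) = iceIn (C i q) 3 := by
    cases hb : iceIn (C i q) 3 <;> rw [hb] at hbw <;> simp [bi] at hbw
    · have hv : rsum (fun i q => iceVal (C i q)) i q = 0 := by linarith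
      simp [hv]
    · have hv : rsum (fun i q => iceVal (C i q)) i q = 1 := by linarith
      simp [hv]
  rw [e0, e1, e2, e3]
  exact typeOf_iceIn _


/-- Replacing `WE` by `1`, `NS` by `−1` and `NE, SW, NW, SE` by `0` maps
square-ice configuration matrices with U-turn boundary bijectively onto
`μ`-UASMs. -/
theorem ice_bijection (n m : ℕ) (hn : 0 < n) (μ : Fin n → ℕ)
    (hμ : StrictAnti μ) (hpos : ∀ i, 0 < μ i) (hm : m = μ ⟨0, hn⟩) :
    Set.BijOn
      (fun (C : Fin (2*n) → Fin m → Fin 6) => fun i q => iceVal (C i q))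
      {C | IsCM n m μ C} {A | IsUASM n m μ A} := by
  have hm0 : 0 < m := by rw [hm]; exact hpos _
  have mapsχ : Set.MapsTo (fun (C : Fin (2*n) → Fin m → Fin 6) => fun i q => iceVal (C i q))
      {C | IsCM n m μ C} {A | IsUASM n m μ A} :=
    fun C hC => chi_isUASM n m hn μ hm0 C hC
  have mapsψ : Set.MapsTo IceBij.psi {A | IsUASM n m μ A} {C | IsCM n m μ C} :=
    fun A hA => (psi_key n m hn μ hm0 A hA).1
  have leftInv : Set.LeftInvOn IceBij.psi
      (fun (C : Fin (2*n) → Fin m → Fin 6) => fun i q => iceVal (C i q))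
      {C | IsCM n m μ C} :=
    fun C hC => psi_chi n m μ C hC
  have rightInv : Set.RightInvOn IceBij.psi
      (fun (C : Fin (2*n) → Fin m → Fin 6) => fun i q => iceVal (C i q))
      {A | IsUASM n m μ A} :=
    fun A hA => (psi_key n m hn μ hm0 A hA).2
  exact Set.InvOn.bijOn ⟨leftInv, rightInv⟩ mapsχ mapsψ
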